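/- Let A be a subspace arrangement in ℂ^l (no member contained in another), x₀ ∈ A, Ã'' = {x₀ ∩ y : y ∈ A \ {x₀}}, and let A'' be obtained from Ã'' by deleting every element strictly contained in another element of Ã''. Then the natural inclusion D(A'') ↪ D(Ã'') is a quasi-isomorphism. -/

import Mathlib

/-!
Formalization of the Yuzvinsky–Feichtner rational model `D(B)` of the
complement of an arrangement of linear subspaces of `ℂ^l`, together with the
deletion/restriction constructions of the paper.
-/

open scoped Classical

noncomputable section

/-- The type of linear subspaces of `ℂ^l`. -/
abbrev Subsp (l : ℕ) := Submodule ℂ (Fin l → ℂ)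

/-- Intersection of a finite set of subspaces (`⊤`, i.e. `ℂ^l`, for the empty set). -/
def inter {l : ℕ} (σ : Finset (Subsp l)) : Subsp l := σ.inf id

/-- Underlying vector space of the Yuzvinsky–Feichtner model: formal ℚ-linear
combinations of finite sets of subspaces (basis elements are the `σ ⊆ B`). -/
abbrev DFull (l : ℕ) := Finset (Subsp l) →₀ ℚ

/-- 1-based position of `x` inside `σ`, with respect to the linear order `r`. -/
def pos {l : ℕ} (r : LinearOrder (Subsp l)) (σ : Finset (Subsp l)) (x : Subsp l) : ℕ :=
  (σ.filter fun y => r.lt y x).card + 1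

/-- Value of the differential on the basis element `σ`:
`dσ = ∑_{j : ∩(σ∖{x_j}) = ∩σ} (−1)^j (σ∖{x_j})`. -/
def dBasis {l : ℕ} (r : LinearOrder (Subsp l)) (σ : Finset (Subsp l)) : DFull l :=
  ∑ x ∈ σ.filter fun x => inter (σ.erase x) = inter σ,
    ((-1 : ℚ) ^ pos r σ x) • Finsupp.single (σ.erase x) (1 : ℚ)

/-- The differential of the Yuzvinsky–Feichtner complex. -/
def diff {l : ℕ} (r : LinearOrder (Subsp l)) : DFull l →ₗ[ℚ] DFull l :=
  Finsupp.lsum ℚ fun σ => LinearMap.toSpanSingleton ℚ (DFull l) (dBasis r σ)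

/-- Codimension of `W` inside the ambient subspace `X` (as an integer). -/
def codimIn {l : ℕ} (X W : Subsp l) : ℤ :=
  (Module.finrank ℂ X : ℤ) - (Module.finrank ℂ (W ⊓ X : Subsp l) : ℤ)

/-- Codimension of `W` in `ℂ^l`. -/
def codim {l : ℕ} (W : Subsp l) : ℤ := codimIn ⊤ W

/-- Degree of the basis element `σ`: `deg σ = 2 codim (∩σ) − |σ|`, the
codimension being computed inside the ambient space `X`. -/
def degIn {l : ℕ} (X : Subsp l) (σ : Finset (Subsp l)) : ℤ :=
  2 * codimIn X (inter σ) - (σ.card : ℤ)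

/-- `D(B)`: the span of the basis elements `σ ⊆ B`. -/
def Dsub {l : ℕ} (B : Finset (Subsp l)) : Submodule ℚ (DFull l) :=
  Submodule.span ℚ {f | ∃ σ : Finset (Subsp l), σ ⊆ B ∧ f = Finsupp.single σ (1 : ℚ)}

/-- The degree-`q` component of `D(B)` (ambient space `X`). -/
def Dcomp {l : ℕ} (X : Subsp l) (B : Finset (Subsp l)) (q : ℤ) : Submodule ℚ (DFull l) :=
  Submodule.span ℚ
    {f | ∃ σ : Finset (Subsp l), σ ⊆ B ∧ degIn X σ = q ∧ f = Finsupp.single σ (1 : ℚ)}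

/-- Degree-`q` cocycles of `D(B)`. -/
def cocycles {l : ℕ} (r : LinearOrder (Subsp l)) (X : Subsp l) (B : Finset (Subsp l)) (q : ℤ) :
    Submodule ℚ (DFull l) :=
  Dcomp X B q ⊓ LinearMap.ker (diff r)

/-- Degree-`q` coboundaries of `D(B)`. -/
def cobounds {l : ℕ} (r : LinearOrder (Subsp l)) (X : Subsp l) (B : Finset (Subsp l)) (q : ℤ) :
    Submodule ℚ (DFull l) :=
  Dcomp X B q ⊓ Submodule.map (diff r) (Dcomp X B (q - 1))

/-- Degree-`q` cohomology `H^q(D(B))`. -/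
abbrev cohomology {l : ℕ} (r : LinearOrder (Subsp l)) (X : Subsp l) (B : Finset (Subsp l)) (q : ℤ) :=
  cocycles r X B q ⧸ Submodule.comap (cocycles r X B q).subtype (cobounds r X B q)

lemma Dcomp_mono {l : ℕ} (X : Subsp l) {B B' : Finset (Subsp l)} (h : B' ⊆ B) (q : ℤ) :
    Dcomp X B' q ≤ Dcomp X B q :=
  Submodule.span_mono (by rintro f ⟨σ, h1, h2, rfl⟩; exact ⟨σ, h1.trans h, h2, rfl⟩)

lemma cocycles_mono {l : ℕ} (r : LinearOrder (Subsp l)) (X : Subsp l) {B B' : Finset (Subsp l)}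
    (h : B' ⊆ B) (q : ℤ) : cocycles r X B' q ≤ cocycles r X B q :=
  inf_le_inf_right _ (Dcomp_mono X h q)

lemma cobounds_mono {l : ℕ} (r : LinearOrder (Subsp l)) (X : Subsp l) {B B' : Finset (Subsp l)}
    (h : B' ⊆ B) (q : ℤ) : cobounds r X B' q ≤ cobounds r X B q :=
  inf_le_inf (Dcomp_mono X h q) (Submodule.map_mono (Dcomp_mono X h (q - 1)))

/-- The map induced in degree-`q` cohomology by an inclusion of arrangements `B' ⊆ B`
(induced by the inclusion of cochain complexes `D(B') ↪ D(B)`). -/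
def inducedMap {l : ℕ} (r : LinearOrder (Subsp l)) (X : Subsp l) {B B' : Finset (Subsp l)}
    (h : B' ⊆ B) (q : ℤ) : cohomology r X B' q →ₗ[ℚ] cohomology r X B q :=
  Submodule.mapQ (Submodule.comap (cocycles r X B' q).subtype (cobounds r X B' q))
    (Submodule.comap (cocycles r X B q).subtype (cobounds r X B q))
    (Submodule.inclusion (cocycles_mono r X h q)) (by
      intro v hv
      simp only [Submodule.mem_comap, Submodule.subtype_apply, Submodule.coe_inclusion] at hv ⊢
      exact cobounds_mono r X h q hv)

lemma eraseSubset {l : ℕ} (A : Finset (Subsp l)) (x₀ : Subsp l) : A.erase x₀ ⊆ A := by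
  intro y hy; exact Finset.mem_of_mem_erase hy

/-- A subspace arrangement: no member is contained in another. -/
def IsArrangement {l : ℕ} (A : Finset (Subsp l)) : Prop :=
  ∀ x ∈ A, ∀ y ∈ A, x ≤ y → x = y

/-- `Ã'' = {x₀ ∩ y | y ∈ A'}`. -/
def tildeRestriction {l : ℕ} (x₀ : Subsp l) (A' : Finset (Subsp l)) : Finset (Subsp l) :=
  A'.image fun y => x₀ ⊓ y

/-- The restricted arrangement `A''`: the elements of `Ã''` that are not strictly
contained in another element of `Ã''`. -/
def restriction {l : ℕ} (x₀ : Subsp l) (A' : Finset (Subsp l)) : Finset (Subsp l) :=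
  (tildeRestriction x₀ A').filter fun w => ∀ w' ∈ tildeRestriction x₀ A', ¬ w < w'

lemma restriction_subset {l : ℕ} (x₀ : Subsp l) (A' : Finset (Subsp l)) :
    restriction x₀ A' ⊆ tildeRestriction x₀ A' := Finset.filter_subset _ _

/-- `x₀` is a separator: `x₀ ∩ (∩ A') ⊊ ∩ A'`. -/
def IsSeparator {l : ℕ} (A : Finset (Subsp l)) (x₀ : Subsp l) : Prop :=
  x₀ ⊓ inter (A.erase x₀) < inter (A.erase x₀)

/-- The conditions imposed in the paper on the fixed linear order on the
subspaces: `x₀` comes first, the equivalence classes of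
`y ∼ z ⟺ x₀ ∩ y = x₀ ∩ z` on `A' = A ∖ {x₀}` are consecutive intervals,
and the order on `Ã''` is compatible with the one on `A'`. -/
def GoodOrder {l : ℕ} (r : LinearOrder (Subsp l)) (A : Finset (Subsp l)) (x₀ : Subsp l) : Prop :=
  (∀ y ∈ A.erase x₀, r.lt x₀ y) ∧
  (∀ y ∈ A.erase x₀, ∀ z ∈ A.erase x₀, ∀ w ∈ A.erase x₀,
      r.le y z → r.le z w → x₀ ⊓ y = x₀ ⊓ w → x₀ ⊓ y = x₀ ⊓ z) ∧
  (∀ y ∈ A.erase x₀, ∀ z ∈ A.erase x₀, r.lt y z → x₀ ⊓ y ≠ x₀ ⊓ z →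
      r.lt (x₀ ⊓ y) (x₀ ⊓ z))

/-- Value of the map `φ` on a basis element `σ`. -/
def phiBasis {l : ℕ} (x₀ : Subsp l) (σ : Finset (Subsp l)) : DFull l :=
  if x₀ ∈ σ ∧ Set.InjOn (fun y => x₀ ⊓ y) ↑(σ.erase x₀) then
    ((-1 : ℚ) ^ (σ.card - 1)) • Finsupp.single ((σ.erase x₀).image fun y => x₀ ⊓ y) (1 : ℚ)
  else 0

/-- The map `φ : D(A) → D(Ã'')` (defined on the whole ambient space). -/
def phi {l : ℕ} (x₀ : Subsp l) : DFull l →ₗ[ℚ] DFull l :=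
  Finsupp.lsum ℚ fun σ => LinearMap.toSpanSingleton ℚ (DFull l) (phiBasis x₀ σ)

lemma phi_apply_single {l : ℕ} (x₀ : Subsp l) (σ : Finset (Subsp l)) :
    phi x₀ (Finsupp.single σ (1 : ℚ)) = phiBasis x₀ σ := by
  simp [phi]

lemma diff_apply_single {l : ℕ} (r : LinearOrder (Subsp l)) (σ : Finset (Subsp l)) :
    diff r (Finsupp.single σ (1 : ℚ)) = dBasis r σ := by
  simp [diff]

lemma phi_vanish {l : ℕ} (x₀ : Subsp l) {B : Finset (Subsp l)} (hx : x₀ ∉ B) :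
    ∀ f ∈ Dsub B, phi x₀ f = 0 := by
  intro f hf
  induction hf using Submodule.span_induction with
  | mem f hfmem =>
      obtain ⟨σ, hσ, rfl⟩ := hfmem
      rw [phi_apply_single]
      have hx₀σ : ¬ x₀ ∈ σ := fun h => hx (hσ h)
      simp [phiBasis, hx₀σ]
  | zero => simp
  | add f g _ _ hf hg => simp [map_add, hf, hg]
  | smul c f _ hf => simp [map_smul, hf]

lemma diff_mem {l : ℕ} (r : LinearOrder (Subsp l)) {B : Finset (Subsp l)} :
    ∀ f ∈ Dsub B, diff r f ∈ Dsub B := by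
  intro f hf
  induction hf using Submodule.span_induction with
  | mem f hfmem =>
      obtain ⟨σ, hσ, rfl⟩ := hfmem
      rw [diff_apply_single, dBasis]
      refine Submodule.sum_mem _ fun x hx => Submodule.smul_mem _ _ ?_
      exact Submodule.subset_span ⟨σ.erase x, (Finset.erase_subset _ _).trans hσ, rfl⟩
  | zero => simp
  | add f g _ _ hf hg => rw [map_add]; exact (Dsub B).add_mem hf hg
  | smul c f _ hf => rw [map_smul]; exact (Dsub B).smul_mem c hf

/-- The quotient cochain complex `D(A)/D(A')`. -/
abbrev DQuot {l : ℕ} (A : Finset (Subsp l)) (x₀ : Subsp l) :=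
  Dsub A ⧸ Submodule.comap (Dsub A).subtype (Dsub (A.erase x₀))

/-- Projection `D(A) → D(A)/D(A')`. -/
def quotProj {l : ℕ} (A : Finset (Subsp l)) (x₀ : Subsp l) : Dsub A →ₗ[ℚ] DQuot A x₀ :=
  (Submodule.comap (Dsub A).subtype (Dsub (A.erase x₀))).mkQ

/-- The differential, restricted to `D(A)`. -/
def diffRes {l : ℕ} (r : LinearOrder (Subsp l)) (A : Finset (Subsp l)) : Dsub A →ₗ[ℚ] Dsub A :=
  (diff r).restrict fun f hf => diff_mem r f hf

/-- The differential of the quotient complex `D(A)/D(A')`. -/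
def diffQuot {l : ℕ} (r : LinearOrder (Subsp l)) (A : Finset (Subsp l)) (x₀ : Subsp l) :
    DQuot A x₀ →ₗ[ℚ] DQuot A x₀ :=
  Submodule.mapQ _ _ (diffRes r A) (by
      intro v hv
      simp only [Submodule.mem_comap, Submodule.subtype_apply] at hv ⊢
      exact diff_mem r _ hv)

/-- The map `φ̄ : D(A)/D(A') → D(Ã'')` induced by `φ`. -/
def phiBar {l : ℕ} (x₀ : Subsp l) (A : Finset (Subsp l)) : DQuot A x₀ →ₗ[ℚ] DFull l :=
  Submodule.liftQ _ ((phi x₀).comp (Dsub A).subtype) (by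
    intro v hv
    simp only [Submodule.mem_comap, Submodule.subtype_apply] at hv
    simp only [LinearMap.mem_ker, LinearMap.comp_apply, Submodule.subtype_apply]
    exact phi_vanish x₀ (Finset.notMem_erase x₀ A) _ hv)

/-- The subspace `I_{u,v}` of `D(A)/D(A')`, as a subspace of `D(A)` before
projecting: spanned by the `{x₀,u,τ} − {x₀,v,τ}` and the `{x₀,u,v,τ}`. -/
def IuvFull {l : ℕ} (A : Finset (Subsp l)) (x₀ u v : Subsp l) : Submodule ℚ (DFull l) :=
  Submodule.span ℚ
    ({f | ∃ τ : Finset (Subsp l), (↑τ : Set (Subsp l)) ⊆ ↑A \ {x₀, u, v} ∧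
        f = Finsupp.single (insert x₀ (insert u τ)) (1 : ℚ)
          - Finsupp.single (insert x₀ (insert v τ)) (1 : ℚ)} ∪
     {f | ∃ τ : Finset (Subsp l), (↑τ : Set (Subsp l)) ⊆ ↑A \ {x₀, u, v} ∧
        f = Finsupp.single (insert x₀ (insert u (insert v τ))) (1 : ℚ)})

/-- The subspace `I_{u,v} ⊆ D(A)/D(A')`. -/
def Iuv {l : ℕ} (A : Finset (Subsp l)) (x₀ u v : Subsp l) : Submodule ℚ (DQuot A x₀) :=
  Submodule.map (quotProj A x₀) (Submodule.comap (Dsub A).subtype (IuvFull A x₀ u v))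

/-- The set `E` of pairs `(y,z)` of distinct elements of `A'` with `x₀ ∩ y = x₀ ∩ z`. -/
def Epairs {l : ℕ} (A : Finset (Subsp l)) (x₀ : Subsp l) : Set (Subsp l × Subsp l) :=
  {p | p.1 ∈ A.erase x₀ ∧ p.2 ∈ A.erase x₀ ∧ x₀ ⊓ p.1 = x₀ ⊓ p.2 ∧ p.1 ≠ p.2}

/-- The subspace `V = Σ_{(u,v) ∈ E} I_{u,v}` of `D(A)/D(A')`. -/
def Vsub {l : ℕ} (A : Finset (Subsp l)) (x₀ : Subsp l) : Submodule ℚ (DQuot A x₀) :=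
  ⨆ p ∈ Epairs A x₀, Iuv A x₀ p.1 p.2

/-- Degree-`q` part of the quotient complex `D(A)/D(A')`. -/
def DcompQuot {l : ℕ} (X : Subsp l) (A : Finset (Subsp l)) (x₀ : Subsp l) (q : ℤ) :
    Submodule ℚ (DQuot A x₀) :=
  Submodule.map (quotProj A x₀) (Submodule.comap (Dsub A).subtype (Dcomp X A q))

def cocyclesQuot {l : ℕ} (r : LinearOrder (Subsp l)) (X : Subsp l) (A : Finset (Subsp l))
    (x₀ : Subsp l) (q : ℤ) : Submodule ℚ (DQuot A x₀) :=
  DcompQuot X A x₀ q ⊓ LinearMap.ker (diffQuot r A x₀)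

def coboundsQuot {l : ℕ} (r : LinearOrder (Subsp l)) (X : Subsp l) (A : Finset (Subsp l))
    (x₀ : Subsp l) (q : ℤ) : Submodule ℚ (DQuot A x₀) :=
  DcompQuot X A x₀ q ⊓ Submodule.map (diffQuot r A x₀) (DcompQuot X A x₀ (q - 1))

/-- Degree-`q` cohomology of the quotient complex `D(A)/D(A')`. -/
abbrev cohomologyQuot {l : ℕ} (r : LinearOrder (Subsp l)) (X : Subsp l) (A : Finset (Subsp l))
    (x₀ : Subsp l) (q : ℤ) :=
  cocyclesQuot r X A x₀ q ⧸
    Submodule.comap (cocyclesQuot r X A x₀ q).subtype (coboundsQuot r X A x₀ q)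

/-- Ungraded cocycles of `D(B)`. -/
def cocyclesAll {l : ℕ} (r : LinearOrder (Subsp l)) (B : Finset (Subsp l)) :
    Submodule ℚ (DFull l) :=
  Dsub B ⊓ LinearMap.ker (diff r)

/-- Ungraded coboundaries of `D(B)`. -/
def coboundsAll {l : ℕ} (r : LinearOrder (Subsp l)) (B : Finset (Subsp l)) :
    Submodule ℚ (DFull l) :=
  Dsub B ⊓ Submodule.map (diff r) (Dsub B)

/-- Ungraded cohomology `H^*(D(B))`. -/
abbrev cohomologyAll {l : ℕ} (r : LinearOrder (Subsp l)) (B : Finset (Subsp l)) :=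
  cocyclesAll r B ⧸ Submodule.comap (cocyclesAll r B).subtype (coboundsAll r B)

/-- The map `θ : D(A') → D(Ã'')`, `{x_{i₁},…,x_{i_r}} ↦ {x₀ ∩ x_{i₁},…,x₀ ∩ x_{i_r}}`. -/
def theta {l : ℕ} (x₀ : Subsp l) : DFull l →ₗ[ℚ] DFull l :=
  Finsupp.lsum ℚ fun σ =>
    LinearMap.toSpanSingleton ℚ (DFull l) (Finsupp.single (σ.image fun y => x₀ ⊓ y) (1 : ℚ))

/-- The map `k : D(A) → D(A')`, the identity on basis elements not containing
`x₀`, and zero on those containing `x₀`. -/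
def kmap {l : ℕ} (x₀ : Subsp l) : DFull l →ₗ[ℚ] DFull l :=
  Finsupp.lsum ℚ fun σ =>
    if x₀ ∈ σ then 0 else LinearMap.toSpanSingleton ℚ (DFull l) (Finsupp.single σ (1 : ℚ))

/-- The Euler characteristic of `D(A)`:
`χ = Σ_q (−1)^q dim_ℚ H^q(D(A))` (all degrees lie in `[−|A|, 2l]`). -/
def eulerChar {l : ℕ} (r : LinearOrder (Subsp l)) (A : Finset (Subsp l)) : ℚ :=
  ∑ q ∈ Finset.Icc (-(A.card : ℤ)) (2 * l : ℤ),
    (-1 : ℚ) ^ q * (Module.finrank ℚ (cohomology r ⊤ A q) : ℚ)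

/-- The intersection lattice `L(A)`: all intersections of members of `A`
(with `ℂ^l = ∩∅` as bottom element), ordered by reverse inclusion. -/
def latticeSet {l : ℕ} (A : Finset (Subsp l)) : Set (Subsp l) :=
  {W | ∃ S : Finset (Subsp l), S ⊆ A ∧ W = inter S}

/-- `covL A a b`: in the intersection lattice `L(A)` (ordered by reverse
inclusion), `b` covers `a`. -/
def covL {l : ℕ} (A : Finset (Subsp l)) (a b : Subsp l) : Prop :=
  b < a ∧ ∀ c ∈ latticeSet A, ¬(b < c ∧ c < a)

/-- The meet `a ∧ b` in the intersection lattice `L(A)`: the intersection of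
the members of `A` containing both `a` and `b`. -/
def meetL {l : ℕ} (A : Finset (Subsp l)) (a b : Subsp l) : Subsp l :=
  inter (A.filter fun x => a ≤ x ∧ b ≤ x)

/-- `L(A)` is a geometric lattice: it is a finite atomistic semimodular lattice.
(Atoms are the elements covering the bottom element `ℂ^l`; every element is the
join — i.e. intersection — of the atoms it lies above; and the lattice is
(upper) semimodular.  The join of `a` and `b` in `L(A)` is `a ⊓ b`.) -/
def IsGeometricL {l : ℕ} (A : Finset (Subsp l)) : Prop :=
  (∀ a ∈ latticeSet A, a = sInf {t : Subsp l | t ∈ latticeSet A ∧ covL A ⊤ t ∧ a ≤ t}) ∧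
  (∀ a ∈ latticeSet A, ∀ b ∈ latticeSet A, covL A (meetL A a b) a → covL A b (a ⊓ b))

end

noncomputable section Aux

open Finsupp

variable {l : ℕ}

lemma inter_le_of_mem {σ : Finset (Subsp l)} {x : Subsp l} (hx : x ∈ σ) : inter σ ≤ x :=
  Finset.inf_le hx

lemma inter_anti {s t : Finset (Subsp l)} (h : s ⊆ t) : inter t ≤ inter s :=
  Finset.inf_mono h

lemma inter_insert (r : LinearOrder (Subsp l)) (x : Subsp l) (σ : Finset (Subsp l)) :
    inter (insert x σ) = x ⊓ inter σ := Finset.inf_insert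

lemma inter_insert_eq (r : LinearOrder (Subsp l)) {σ : Finset (Subsp l)} {w w' : Subsp l}
    (hw : w ∈ σ) (hle : w ≤ w') :
    inter (insert w' σ) = inter σ := by
  rw [inter_insert r, inf_eq_right]
  exact (inter_le_of_mem hw).trans hle

/-- The set of elements of `σ` whose deletion does not change the intersection. -/
def Fset (r : LinearOrder (Subsp l)) (σ : Finset (Subsp l)) : Finset (Subsp l) :=
  σ.filter fun x => inter (σ.erase x) = inter σ

variable {r : LinearOrder (Subsp l)}

lemma dBasis_eq (r : LinearOrder (Subsp l)) (σ : Finset (Subsp l)) :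
    dBasis r σ = ∑ x ∈ Fset r σ, ((-1 : ℚ) ^ pos r σ x) • Finsupp.single (σ.erase x) (1 : ℚ) := by
  rw [dBasis, Fset]

lemma mem_Fset {σ x} : x ∈ Fset r σ ↔ x ∈ σ ∧ inter (σ.erase x) = inter σ :=
  Finset.mem_filter

lemma Fset_symm {σ : Finset (Subsp l)} {x y : Subsp l} (hx : x ∈ Fset r σ)
    (hy : y ∈ Fset r (σ.erase x)) : y ∈ Fset r σ ∧ x ∈ Fset r (σ.erase y) := by
  rw [mem_Fset] at hx hy ⊢
  rw [mem_Fset]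
  obtain ⟨hxσ, hxI⟩ := hx
  obtain ⟨hyxσ, hyI⟩ := hy
  obtain ⟨hyx, hyσ⟩ := Finset.mem_erase.mp hyxσ
  have hcomm : (σ.erase x).erase y = (σ.erase y).erase x := Finset.erase_right_comm
  have h1 : inter ((σ.erase x).erase y) = inter σ := by rw [hyI, hxI]
  have h2 : inter σ ≤ inter (σ.erase y) := inter_anti (Finset.erase_subset _ _)
  have h3 : inter (σ.erase y) ≤ inter ((σ.erase y).erase x) :=
    inter_anti (Finset.erase_subset _ _)
  have h4 : inter ((σ.erase y).erase x) = inter σ := by rw [← hcomm, h1]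
  have h5 : inter (σ.erase y) = inter σ := le_antisymm (by rw [← h4]; exact h3) h2
  exact ⟨⟨hyσ, h5⟩, Finset.mem_erase.mpr ⟨fun h => hyx h.symm, hxσ⟩, by rw [h4, h5]⟩

lemma pos_erase {σ : Finset (Subsp l)} {x y : Subsp l}
    (hx : x ∈ σ) (hxy : x ≠ y) :
    pos r σ y = pos r (σ.erase x) y + (if r.lt x y then 1 else 0) := by
  unfold pos
  have : σ.filter (fun z => r.lt z y) =
      if r.lt x y then insert x ((σ.erase x).filter fun z => r.lt z y)
      else (σ.erase x).filter fun z => r.lt z y := by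
    conv_lhs => rw [← Finset.insert_erase hx]
    rw [Finset.filter_insert]
  rw [this]
  by_cases h : r.lt x y
  · rw [if_pos h, if_pos h, Finset.card_insert_of_notMem (by simp)]
  · rw [if_neg h, if_neg h]

lemma rlt_trichotomy (x y : Subsp l) (hne : x ≠ y) : r.lt x y ∨ r.lt y x := by
  rcases @lt_trichotomy _ r x y with h | h | h
  · exact Or.inl h
  · exact absurd h hne
  · exact Or.inr h

lemma rlt_asymm {x y : Subsp l} (h : r.lt x y) : ¬ r.lt y x :=
  @lt_asymm _ (@PartialOrder.toPreorder _ (@LinearOrder.toPartialOrder _ r)) _ _ h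

/-- `d ∘ d = 0` on basis elements. -/
lemma diff_diff_single (r : LinearOrder (Subsp l)) (σ : Finset (Subsp l)) :
    diff r (diff r (Finsupp.single σ (1 : ℚ))) = 0 := by
  rw [diff_apply_single, dBasis_eq, map_sum]
  have step : ∀ x ∈ Fset r σ,
      diff r (((-1 : ℚ) ^ pos r σ x) • Finsupp.single (σ.erase x) (1 : ℚ)) =
      ∑ y ∈ Fset r (σ.erase x), (((-1 : ℚ) ^ pos r σ x) * ((-1 : ℚ) ^ pos r (σ.erase x) y)) •
        Finsupp.single ((σ.erase x).erase y) (1 : ℚ) := by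
    intro x _
    rw [map_smul, diff_apply_single, dBasis_eq, Finset.smul_sum]
    refine Finset.sum_congr rfl fun y _ => ?_
    rw [smul_smul]
  rw [Finset.sum_congr rfl step, Finset.sum_sigma']
  refine Finset.sum_involution (fun p _ => ⟨p.2, p.1⟩) ?_ ?_ ?_ ?_
  · intro p hp
    simp only [Finset.mem_sigma] at hp
    obtain ⟨hx, hy⟩ := hp
    have hxσ : p.1 ∈ σ := (mem_Fset.mp hx).1
    have hymem := Finset.mem_erase.mp (mem_Fset.mp hy).1
    have hyx : p.2 ≠ p.1 := hymem.1
    have hyσ : p.2 ∈ σ := hymem.2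
    have hcomm : (σ.erase p.1).erase p.2 = (σ.erase p.2).erase p.1 := Finset.erase_right_comm
    rw [hcomm, ← add_smul]
    convert zero_smul ℚ _
    have e1 : pos r σ p.1 = pos r (σ.erase p.2) p.1 + (if r.lt p.2 p.1 then 1 else 0) :=
      pos_erase hyσ hyx
    have e2 : pos r σ p.2 = pos r (σ.erase p.1) p.2 + (if r.lt p.1 p.2 then 1 else 0) :=
      pos_erase hxσ (fun h => hyx h.symm)
    rw [e1, e2]
    rcases rlt_trichotomy p.1 p.2 (fun h => hyx h.symm) with h | h
    · rw [if_pos h, if_neg (rlt_asymm h)]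
      ring
    · rw [if_pos h, if_neg (rlt_asymm h)]
      ring
  · intro p hp hne h
    simp only [Finset.mem_sigma] at hp
    have hyx : p.2 ≠ p.1 := (Finset.mem_erase.mp (mem_Fset.mp hp.2).1).1
    exact hyx (congrArg Sigma.fst h)
  · intro p hp
    simp only [Finset.mem_sigma] at hp ⊢
    obtain ⟨h1, h2⟩ := Fset_symm hp.1 hp.2
    exact ⟨h1, h2⟩
  · intro p hp
    rfl

lemma diff_diff (r : LinearOrder (Subsp l)) (f : DFull l) : diff r (diff r f) = 0 := by
  induction f using Finsupp.induction_linear with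
  | zero => simp
  | add f g hf hg => rw [map_add, map_add, hf, hg, add_zero]
  | single σ c =>
      rw [← Finsupp.smul_single_one, map_smul, map_smul, diff_diff_single, smul_zero]

end Aux

noncomputable section Homotopy

open Finsupp

variable {l : ℕ} {r : LinearOrder (Subsp l)}

/-- The contracting homotopy: `σ ↦ ± (σ ∪ {w'})` when `w ∈ σ`, `w' ∉ σ`. -/
def hB (r : LinearOrder (Subsp l)) (w w' : Subsp l) (σ : Finset (Subsp l)) : DFull l :=
  if w ∈ σ ∧ w' ∉ σ then
    ((-1 : ℚ) ^ pos r (insert w' σ) w') • Finsupp.single (insert w' σ) (1 : ℚ)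
  else 0

def hmap (r : LinearOrder (Subsp l)) (w w' : Subsp l) : DFull l →ₗ[ℚ] DFull l :=
  Finsupp.lsum ℚ fun σ => LinearMap.toSpanSingleton ℚ (DFull l) (hB r w w' σ)

lemma hmap_single (w w' : Subsp l) (σ : Finset (Subsp l)) :
    hmap r w w' (Finsupp.single σ (1 : ℚ)) = hB r w w' σ := by
  simp [hmap]

/-- The projection `π = id − d∘h − h∘d`. -/
def piMap (r : LinearOrder (Subsp l)) (w w' : Subsp l) : DFull l →ₗ[ℚ] DFull l :=
  LinearMap.id - (diff r).comp (hmap r w w') - (hmap r w w').comp (diff r)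

lemma piMap_apply (w w' : Subsp l) (f : DFull l) :
    piMap r w w' f = f - diff r (hmap r w w' f) - hmap r w w' (diff r f) := rfl

lemma hmap_dBasis (w w' : Subsp l) (σ : Finset (Subsp l)) :
    hmap r w w' (dBasis r σ) =
      ∑ x ∈ Fset r σ, ((-1 : ℚ) ^ pos r σ x) • hB r w w' (σ.erase x) := by
  rw [dBasis_eq, map_sum]
  exact Finset.sum_congr rfl fun x _ => by rw [map_smul, hmap_single]

lemma piMap_single_of_not_mem {w w' : Subsp l} {σ : Finset (Subsp l)} (hw : w ∉ σ) :
    piMap r w w' (Finsupp.single σ (1 : ℚ)) = Finsupp.single σ (1 : ℚ) := by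
  rw [piMap_apply, hmap_single, diff_apply_single, hmap_dBasis]
  have h1 : hB r w w' σ = 0 := by simp [hB, hw]
  have h2 : ∀ x ∈ Fset r σ, ((-1 : ℚ) ^ pos r σ x) • hB r w w' (σ.erase x) = 0 := by
    intro x _
    have : w ∉ σ.erase x := fun h => hw (Finset.mem_of_mem_erase h)
    simp [hB, this]
  rw [h1, map_zero, Finset.sum_congr rfl h2, Finset.sum_const_zero, sub_zero, sub_zero]

lemma mem_Fset_of_le {w w' : Subsp l} {σ : Finset (Subsp l)} (hw : w ∈ σ) (hw' : w' ∈ σ)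
    (hne : w ≠ w') (hle : w ≤ w') : w' ∈ Fset r σ := by
  rw [mem_Fset]
  refine ⟨hw', ?_⟩
  have hwe : w ∈ σ.erase w' := Finset.mem_erase.mpr ⟨hne, hw⟩
  conv_rhs => rw [← Finset.insert_erase hw']
  exact (inter_insert_eq r hwe hle).symm

lemma piMap_single_of_mem_mem {w w' : Subsp l} {σ : Finset (Subsp l)} (hw : w ∈ σ)
    (hw' : w' ∈ σ) (hne : w ≠ w') (hle : w ≤ w') :
    piMap r w w' (Finsupp.single σ (1 : ℚ)) = 0 := by
  rw [piMap_apply, hmap_single, diff_apply_single, hmap_dBasis]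
  have h1 : hB r w w' σ = 0 := by simp [hB, hw']
  have h2 : ∑ x ∈ Fset r σ, ((-1 : ℚ) ^ pos r σ x) • hB r w w' (σ.erase x)
      = Finsupp.single σ (1 : ℚ) := by
    rw [Finset.sum_eq_single_of_mem w' (mem_Fset_of_le hw hw' hne hle)]
    · have hc : w ∈ σ.erase w' ∧ w' ∉ σ.erase w' :=
        ⟨Finset.mem_erase.mpr ⟨hne, hw⟩, Finset.notMem_erase _ _⟩
      rw [hB, if_pos hc, Finset.insert_erase hw', smul_smul, ← pow_add]
      rw [Even.neg_one_pow ⟨pos r σ w', rfl⟩, one_smul]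
    · intro x hx hxw'
      by_cases hxw : x = w
      · have : w ∉ σ.erase x := by rw [hxw]; exact Finset.notMem_erase _ _
        simp [hB, this]
      · have : w' ∈ σ.erase x := Finset.mem_erase.mpr ⟨fun h => hxw' h.symm, hw'⟩
        simp [hB, this]
  rw [h1, map_zero, h2, sub_zero, sub_self]

lemma sign_cross {w w' : Subsp l} {σ : Finset (Subsp l)} (hw : w ∈ σ) (hw' : w' ∉ σ)
    {x : Subsp l} (hx : x ∈ σ.erase w) :
    ((-1 : ℚ) ^ pos r σ x) * ((-1 : ℚ) ^ pos r (insert w' (σ.erase x)) w')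
      = -(((-1 : ℚ) ^ pos r (insert w' σ) w') * ((-1 : ℚ) ^ pos r (insert w' σ) x)) := by
  obtain ⟨hxw, hxσ⟩ := Finset.mem_erase.mp hx
  have hxw' : x ≠ w' := fun h => hw' (h ▸ hxσ)
  have hτ : (insert w' σ).erase w' = σ := Finset.erase_insert hw'
  have e1 : pos r (insert w' σ) x = pos r σ x + (if r.lt w' x then 1 else 0) := by
    conv_lhs => rw [pos_erase (Finset.mem_insert_self w' σ) (fun h => hxw' h.symm)]
    rw [hτ]
  have e2 : pos r (insert w' σ) w'
      = pos r (insert w' (σ.erase x)) w' + (if r.lt x w' then 1 else 0) := by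
    conv_lhs => rw [pos_erase (Finset.mem_insert_of_mem hxσ) hxw']
    rw [Finset.erase_insert_of_ne (fun h => hxw' h.symm)]
  rw [e1, e2]
  rcases rlt_trichotomy x w' hxw' with h | h
  · rw [if_pos h, if_neg (rlt_asymm h)]
    ring
  · rw [if_neg (rlt_asymm h), if_pos h]
    ring

/-- The key computation: value of `π` on a basis element containing `w` but not `w'`. -/
lemma piMap_single_key {w w' : Subsp l} {σ : Finset (Subsp l)} (hw : w ∈ σ) (hw' : w' ∉ σ)
    (hlt : w < w') :
    piMap r w w' (Finsupp.single σ (1 : ℚ)) =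
      -(if inter ((insert w' σ).erase w) = inter (insert w' σ)
        then ((-1 : ℚ) ^ (pos r (insert w' σ) w' + pos r (insert w' σ) w)) •
          Finsupp.single ((insert w' σ).erase w) (1 : ℚ)
        else 0) := by
  have hne : w ≠ w' := ne_of_lt hlt
  set τ := insert w' σ with hτdef
  have hIτ : inter τ = inter σ := by rw [hτdef]; exact inter_insert_eq r hw hlt.le
  have hτw' : τ.erase w' = σ := Finset.erase_insert hw'
  set c : ℚ := (-1 : ℚ) ^ pos r τ w' with hcdef
  set S : DFull l := ∑ x ∈ σ.erase w,
      (if inter (τ.erase x) = inter τ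
       then (c * (-1 : ℚ) ^ pos r τ x) • Finsupp.single (τ.erase x) (1 : ℚ) else 0) with hSdef
  -- the `d ∘ h` part
  have hA : diff r (hmap r w w' (Finsupp.single σ (1 : ℚ)))
      = Finsupp.single σ (1 : ℚ)
        + (if inter (τ.erase w) = inter τ
           then (c * (-1 : ℚ) ^ pos r τ w) • Finsupp.single (τ.erase w) (1 : ℚ) else 0)
        + S := by
    rw [hmap_single, hB, if_pos ⟨hw, hw'⟩, map_smul, diff_apply_single, dBasis_eq]
    rw [Fset, Finset.sum_filter, Finset.smul_sum]
    have expand : ∀ x ∈ τ,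
        c • (if inter (τ.erase x) = inter τ
             then ((-1 : ℚ) ^ pos r τ x) • Finsupp.single (τ.erase x) (1 : ℚ) else 0)
        = (if inter (τ.erase x) = inter τ
           then (c * (-1 : ℚ) ^ pos r τ x) • Finsupp.single (τ.erase x) (1 : ℚ) else 0) := by
      intro x _
      by_cases hc : inter (τ.erase x) = inter τ
      · rw [if_pos hc, if_pos hc, smul_smul]
      · rw [if_neg hc, if_neg hc, smul_zero]
    rw [Finset.sum_congr rfl expand]
    rw [hτdef, Finset.sum_insert hw', ← hτdef, ← Finset.add_sum_erase _ _ hw, ← hSdef]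
    have hw'term : (if inter (τ.erase w') = inter τ
        then (c * (-1 : ℚ) ^ pos r τ w') • Finsupp.single (τ.erase w') (1 : ℚ) else 0)
        = Finsupp.single σ (1 : ℚ) := by
      rw [hτw', if_pos hIτ.symm, hcdef, ← pow_add,
        Even.neg_one_pow ⟨pos r τ w', rfl⟩, one_smul]
    rw [hw'term, add_assoc]
  -- the `h ∘ d` part
  have hBpart : hmap r w w' (diff r (Finsupp.single σ (1 : ℚ))) = -S := by
    rw [diff_apply_single, hmap_dBasis, Fset, Finset.sum_filter]
    rw [← Finset.add_sum_erase _ _ hw]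
    have hwterm : (if inter (σ.erase w) = inter σ
        then ((-1 : ℚ) ^ pos r σ w) • hB r w w' (σ.erase w) else 0) = 0 := by
      have : w ∉ σ.erase w := Finset.notMem_erase _ _
      by_cases hc : inter (σ.erase w) = inter σ
      · rw [if_pos hc]
        simp [hB, this]
      · rw [if_neg hc]
    rw [hwterm, zero_add, hSdef, ← Finset.sum_neg_distrib]
    refine Finset.sum_congr rfl fun x hx => ?_
    obtain ⟨hxw, hxσ⟩ := Finset.mem_erase.mp hx
    have hxw' : x ≠ w' := fun h => hw' (h ▸ hxσ)
    have hwex : w ∈ σ.erase x := Finset.mem_erase.mpr ⟨fun h => hxw h.symm, hw⟩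
    have h1 : τ.erase x = insert w' (σ.erase x) :=
      Finset.erase_insert_of_ne (fun h => hxw' h.symm)
    have h2 : inter (τ.erase x) = inter (σ.erase x) := by
      rw [h1]; exact inter_insert_eq r hwex hlt.le
    by_cases hc : inter (σ.erase x) = inter σ
    · rw [if_pos hc, if_pos (by rw [h2, hIτ]; exact hc)]
      have hB1 : hB r w w' (σ.erase x)
          = ((-1 : ℚ) ^ pos r (insert w' (σ.erase x)) w') •
            Finsupp.single (insert w' (σ.erase x)) (1 : ℚ) := by
        rw [hB, if_pos ⟨hwex, fun h => hw' (Finset.mem_of_mem_erase h)⟩]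
      have hs : ((-1 : ℚ) ^ pos r σ x) * ((-1 : ℚ) ^ pos r (insert w' (σ.erase x)) w')
          = -(c * (-1 : ℚ) ^ pos r τ x) := by
        rw [hcdef, hτdef]
        exact sign_cross hw hw' hx
      rw [hB1, smul_smul, hs, ← h1, neg_smul]
    · rw [if_neg hc, if_neg (by rw [h2, hIτ]; exact hc), neg_zero]
  have hitee : (if inter (τ.erase w) = inter τ
      then (c * (-1 : ℚ) ^ pos r τ w) • Finsupp.single (τ.erase w) (1 : ℚ) else 0)
      = (if inter (τ.erase w) = inter τ
         then ((-1 : ℚ) ^ (pos r τ w' + pos r τ w)) • Finsupp.single (τ.erase w) (1 : ℚ)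
         else 0) := by
    rw [hcdef, pow_add]
  rw [piMap_apply, hA, hitee, hBpart]
  abel

end Homotopy

noncomputable section Step

open Finsupp

variable {l : ℕ} {r : LinearOrder (Subsp l)}

lemma hmap_mem_Dcomp (X : Subsp l) {B : Finset (Subsp l)} {w w' : Subsp l}
    (hw'B : w' ∈ B) (hlt : w < w') {q : ℤ} {f : DFull l} (hf : f ∈ Dcomp X B q) :
    hmap r w w' f ∈ Dcomp X B (q - 1) := by
  induction hf using Submodule.span_induction with
  | mem f hfmem =>
      obtain ⟨σ, hσB, hdeg, rfl⟩ := hfmem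
      rw [hmap_single, hB]
      by_cases hc : w ∈ σ ∧ w' ∉ σ
      · rw [if_pos hc]
        refine Submodule.smul_mem _ _ (Submodule.subset_span ⟨insert w' σ, ?_, ?_, rfl⟩)
        · exact Finset.insert_subset hw'B hσB
        · rw [degIn, inter_insert_eq r hc.1 hlt.le,
            Finset.card_insert_of_notMem hc.2, ← hdeg, degIn]
          push_cast
          ring
      · rw [if_neg hc]
        exact Submodule.zero_mem _
  | zero => simp
  | add f g _ _ hf hg => rw [map_add]; exact Submodule.add_mem _ hf hg
  | smul c f _ hf => rw [map_smul]; exact Submodule.smul_mem _ _ hf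

lemma piMap_mem_Dcomp (X : Subsp l) {B : Finset (Subsp l)} {w w' : Subsp l}
    (hw'B : w' ∈ B.erase w) (hlt : w < w') {q : ℤ} {f : DFull l} (hf : f ∈ Dcomp X B q) :
    piMap r w w' f ∈ Dcomp X (B.erase w) q := by
  induction hf using Submodule.span_induction with
  | mem f hfmem =>
      obtain ⟨σ, hσB, hdeg, rfl⟩ := hfmem
      by_cases hwσ : w ∈ σ
      · by_cases hw'σ : w' ∈ σ
        · rw [piMap_single_of_mem_mem hwσ hw'σ (ne_of_lt hlt) hlt.le]
          exact Submodule.zero_mem _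
        · rw [piMap_single_key hwσ hw'σ hlt]
          refine Submodule.neg_mem _ ?_
          by_cases hc : inter ((insert w' σ).erase w) = inter (insert w' σ)
          · rw [if_pos hc]
            refine Submodule.smul_mem _ _ (Submodule.subset_span
              ⟨(insert w' σ).erase w, ?_, ?_, rfl⟩)
            · intro y hy
              obtain ⟨hyw, hyτ⟩ := Finset.mem_erase.mp hy
              rcases Finset.mem_insert.mp hyτ with h | h
              · exact h ▸ hw'B
              · exact Finset.mem_erase.mpr ⟨hyw, hσB h⟩
            · have hcard : ((insert w' σ).erase w).card = σ.card := by
                rw [Finset.card_erase_of_mem (Finset.mem_insert_of_mem hwσ),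
                  Finset.card_insert_of_notMem hw'σ]
                omega
              rw [degIn, hc, inter_insert_eq r hwσ hlt.le, hcard, ← hdeg, degIn]
          · rw [if_neg hc]
            exact Submodule.zero_mem _
      · rw [piMap_single_of_not_mem hwσ]
        refine Submodule.subset_span ⟨σ, Finset.subset_erase.mpr ⟨hσB, fun h => hwσ h⟩,
          hdeg, rfl⟩
  | zero => simp
  | add f g _ _ hf hg => rw [map_add]; exact Submodule.add_mem _ hf hg
  | smul c f _ hf => rw [map_smul]; exact Submodule.smul_mem _ _ hf

lemma piMap_eq_self (X : Subsp l) {B' : Finset (Subsp l)} {w w' : Subsp l} (hw : w ∉ B')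
    {q : ℤ} {f : DFull l} (hf : f ∈ Dcomp X B' q) : piMap r w w' f = f := by
  induction hf using Submodule.span_induction with
  | mem f hfmem =>
      obtain ⟨σ, hσB, _, rfl⟩ := hfmem
      exact piMap_single_of_not_mem fun h => hw (hσB h)
  | zero => simp
  | add f g _ _ hf hg => rw [map_add, hf, hg]
  | smul c f _ hf => rw [map_smul, hf]

lemma diff_piMap (w w' : Subsp l) (f : DFull l) :
    diff r (piMap r w w' f) = piMap r w w' (diff r f) := by
  rw [piMap_apply, piMap_apply, map_sub, map_sub, diff_diff r (hmap r w w' f),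
    sub_zero, diff_diff r f, map_zero, sub_zero]

lemma step_bijective (r : LinearOrder (Subsp l)) (X : Subsp l) {B : Finset (Subsp l)}
    {w w' : Subsp l} (hw'B : w' ∈ B.erase w) (hlt : w < w') (hsub : B.erase w ⊆ B) (q : ℤ) :
    Function.Bijective (inducedMap r X hsub q) := by
  have hw'inB : w' ∈ B := Finset.mem_of_mem_erase hw'B
  constructor
  · rw [injective_iff_map_eq_zero]
    intro a ha
    obtain ⟨x, rfl⟩ := Submodule.mkQ_surjective _ a
    rw [inducedMap, Submodule.mkQ_apply, Submodule.mapQ_apply,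
      Submodule.Quotient.mk_eq_zero] at ha
    rw [Submodule.mem_comap, Submodule.subtype_apply] at ha
    have hax : ((Submodule.inclusion (cocycles_mono r X hsub q) x : _) : DFull l) = (x : DFull l) :=
      rfl
    rw [hax] at ha
    have hx1 : (x : DFull l) ∈ Dcomp X (B.erase w) q := x.2.1
    have hx2 : diff r (x : DFull l) = 0 := x.2.2
    obtain ⟨-, b, hb, hdb⟩ := ha
    rw [Submodule.mkQ_apply, Submodule.Quotient.mk_eq_zero, Submodule.mem_comap,
      Submodule.subtype_apply]
    refine ⟨hx1, piMap r w w' b, piMap_mem_Dcomp X hw'B hlt hb, ?_⟩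
    rw [diff_piMap, hdb]
    exact piMap_eq_self X (Finset.notMem_erase w B) hx1
  · intro a
    obtain ⟨x, rfl⟩ := Submodule.mkQ_surjective _ a
    have hx1 : (x : DFull l) ∈ Dcomp X B q := x.2.1
    have hx2 : diff r (x : DFull l) = 0 := x.2.2
    have hc'1 : piMap r w w' (x : DFull l) ∈ Dcomp X (B.erase w) q :=
      piMap_mem_Dcomp X hw'B hlt hx1
    have hc'2 : diff r (piMap r w w' (x : DFull l)) = 0 := by
      rw [diff_piMap, hx2, map_zero]
    refine ⟨Submodule.mkQ _ ⟨piMap r w w' (x : DFull l), hc'1, hc'2⟩, ?_⟩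
    rw [inducedMap, Submodule.mkQ_apply, Submodule.mapQ_apply, Submodule.mkQ_apply,
      Submodule.Quotient.eq]
    rw [Submodule.mem_comap, Submodule.subtype_apply]
    have hdiffexp : ((Submodule.inclusion (cocycles_mono r X hsub q)
        (⟨piMap r w w' (x : DFull l), hc'1, hc'2⟩ :
          cocycles r X (B.erase w) q) : _) : DFull l) - (x : DFull l)
        = piMap r w w' (x : DFull l) - (x : DFull l) := rfl
    rw [Submodule.coe_sub, hdiffexp]
    constructor
    · exact Submodule.sub_mem _ (Dcomp_mono X hsub q hc'1) hx1
    · refine ⟨-(hmap r w w' (x : DFull l)),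
        Submodule.neg_mem _ (hmap_mem_Dcomp X hw'inB hlt hx1), ?_⟩
      rw [map_neg, piMap_apply, hx2, map_zero, sub_zero]
      abel

lemma inducedMap_refl (r : LinearOrder (Subsp l)) (X : Subsp l) {B : Finset (Subsp l)}
    (h : B ⊆ B) (q : ℤ) : inducedMap r X h q = LinearMap.id := by
  refine Submodule.linearMap_qext _ ?_
  ext x
  rw [LinearMap.comp_apply, Submodule.mkQ_apply, inducedMap, Submodule.mapQ_apply]
  rfl

lemma inducedMap_comp (r : LinearOrder (Subsp l)) (X : Subsp l)
    {B B' B'' : Finset (Subsp l)} (h₁ : B'' ⊆ B') (h₂ : B' ⊆ B) (h₃ : B'' ⊆ B) (q : ℤ)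
    (z : cohomology r X B'' q) :
    inducedMap r X h₂ q (inducedMap r X h₁ q z) = inducedMap r X h₃ q z := by
  obtain ⟨x, rfl⟩ := Submodule.mkQ_surjective _ z
  rw [Submodule.mkQ_apply, inducedMap, inducedMap, inducedMap, Submodule.mapQ_apply,
    Submodule.mapQ_apply, Submodule.mapQ_apply]
  rfl

lemma quasi_iso_of_below (r : LinearOrder (Subsp l)) (X : Subsp l) {A₀ T : Finset (Subsp l)}
    (hbelow : ∀ v ∈ T, v ∉ A₀ → ∃ v' ∈ A₀, v < v') :
    ∀ n : ℕ, ∀ B : Finset (Subsp l), (B \ A₀).card = n → ∀ hBA : A₀ ⊆ B, B ⊆ T → ∀ q : ℤ,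
      Function.Bijective (inducedMap r X hBA q) := by
  intro n
  induction n with
  | zero =>
      intro B hcard hBA hBT q
      have hBeq : B = A₀ :=
        Finset.Subset.antisymm
          (Finset.sdiff_eq_empty_iff_subset.mp (Finset.card_eq_zero.mp hcard)) hBA
      subst hBeq
      rw [inducedMap_refl]
      exact Function.bijective_id
  | succ n ih =>
      intro B hcard hBA hBT q
      have hne : (B \ A₀).Nonempty := by
        rw [← Finset.card_pos, hcard]; exact Nat.succ_pos n
      obtain ⟨w, hw⟩ := hne
      obtain ⟨hwB, hwA₀⟩ := Finset.mem_sdiff.mp hw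
      obtain ⟨w', hw'A₀, hww'⟩ := hbelow w (hBT hwB) hwA₀
      have hA₀B₀ : A₀ ⊆ B.erase w :=
        Finset.subset_erase.mpr ⟨hBA, fun h => hwA₀ h⟩
      have hB₀T : B.erase w ⊆ T := (Finset.erase_subset _ _).trans hBT
      have hcard' : ((B.erase w) \ A₀).card = n := by
        have : (B.erase w) \ A₀ = (B \ A₀).erase w := by
          rw [Finset.erase_sdiff_comm]
        rw [this, Finset.card_erase_of_mem hw, hcard]
        omega
      have hbij₁ := ih (B.erase w) hcard' hA₀B₀ hB₀T q
      have hw'B : w' ∈ B.erase w := hA₀B₀ hw'A₀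
      have hbij₂ := step_bijective r X hw'B hww' (Finset.erase_subset w B) q
      have hcomp : ∀ z, inducedMap r X (Finset.erase_subset w B) q
          (inducedMap r X hA₀B₀ q z) = inducedMap r X hBA q z :=
        fun z => inducedMap_comp r X hA₀B₀ (Finset.erase_subset w B) hBA q z
      have heq : ⇑(inducedMap r X hBA q) =
          ⇑(inducedMap r X (Finset.erase_subset w B) q) ∘ ⇑(inducedMap r X hA₀B₀ q) := by
        funext z
        exact (hcomp z).symm
      rw [heq]
      exact Function.Bijective.comp hbij₂ hbij₁

end Step

/-- Corollary 2.2. For a subspace arrangement `A` and `x₀ ∈ A`,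
the natural inclusion `D(A'') ↪ D(Ã'')` of the model of the restricted
arrangement into the model of `Ã'' = {x₀ ∩ y : y ∈ A ∖ {x₀}}` is a
quasi-isomorphism (both are arrangements inside the ambient space `x₀`). -/
theorem statement1 {l : ℕ} (r : LinearOrder (Subsp l)) (A : Finset (Subsp l))
    (harr : IsArrangement A) (x₀ : Subsp l) (hx₀ : x₀ ∈ A) :
    ∀ q : ℤ,
      Function.Bijective (inducedMap r x₀ (restriction_subset x₀ (A.erase x₀)) q) := by
  intro q
  set A' := A.erase x₀
  have hbelow : ∀ v ∈ tildeRestriction x₀ A', v ∉ restriction x₀ A' →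
      ∃ v' ∈ restriction x₀ A', v < v' := by
    intro v hv hvr
    have hnot : ¬ ∀ w' ∈ tildeRestriction x₀ A', ¬ v < w' := by
      intro hall
      exact hvr (by rw [restriction, Finset.mem_filter]; exact ⟨hv, hall⟩)
    push_neg at hnot
    obtain ⟨u, huT, huv⟩ := hnot
    have hsne : ((tildeRestriction x₀ A').filter fun z => v < z).Nonempty :=
      ⟨u, Finset.mem_filter.mpr ⟨huT, huv⟩⟩
    obtain ⟨m, hm, hmmax'⟩ := Finset.exists_maximal hsne
    have hmmax : ∀ z ∈ (tildeRestriction x₀ A').filter (fun z => v < z), ¬ m < z :=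
      fun z hz hmz => lt_irrefl m (hmz.trans_le (hmmax' hz hmz.le))
    obtain ⟨hmT, hvm⟩ := Finset.mem_filter.mp hm
    refine ⟨m, ?_, hvm⟩
    rw [restriction, Finset.mem_filter]
    refine ⟨hmT, fun z hz hmz => ?_⟩
    exact hmmax z (Finset.mem_filter.mpr ⟨hz, hvm.trans hmz⟩) hmz
  exact quasi_iso_of_below r x₀ hbelow _ (tildeRestriction x₀ A') rfl
    (restriction_subset x₀ A') Finset.Subset.rfl q
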